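/- arXiv:1706.00316 — 2 statements merged into one kernel-verified Lean document; each statement's English description precedes it below -/
import Mathlib

section
/- For all x, y, z ∈ ℝ with |x| ≤ 1, |y| ≤ 1, |z| ≤ 1 and all ρ ∈ ℝ with |ρ| < 1, one has ∑_{i=0}^{∞} ρ^i · U_i(x) · U_i(y) · U_i(z) = [ (1+ρ²)³ + 16ρ³·xyz − 4ρ²(1+ρ²)(x² + y² + z²) ] / w₃(x,y,z|ρ). -/
open Polynomial

private lemma sin_nat_bound (θ : ℝ) : ∀ m : ℕ, |Real.sin (m * θ)| ≤ m * |Real.sin θ| := by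
  intro m
  induction m with
  | zero => simp
  | succ k ih =>
    push_cast
    have h : ((k:ℝ)+1)*θ = k*θ + θ := by ring
    rw [h, Real.sin_add]
    have h1 : |Real.sin (k*θ) * Real.cos θ| ≤ |Real.sin (k*θ)| := by
      rw [abs_mul]
      nlinarith [Real.abs_cos_le_one θ, abs_nonneg (Real.sin (k*θ))]
    have h2 : |Real.cos (k*θ) * Real.sin θ| ≤ |Real.sin θ| := by
      rw [abs_mul]
      nlinarith [Real.abs_cos_le_one (k*θ), abs_nonneg (Real.sin θ)]
    have h3 := abs_add_le (Real.sin (k*θ) * Real.cos θ) (Real.cos (k*θ) * Real.sin θ)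
    push_cast at ih
    linarith

private lemma U_eval_pm (n : ℕ) : ((Chebyshev.U ℝ (n:ℤ)).eval (1:ℝ) = n+1) ∧ ((Chebyshev.U ℝ (n:ℤ)).eval (-1:ℝ) = (-1:ℝ)^n*(n+1)) := by
  induction n using Nat.twoStepInduction with
  | zero => norm_num [Chebyshev.U_zero]
  | one => norm_num [Chebyshev.U_one]
  | more k ih1 ih2 =>
    have h := Chebyshev.U_add_two ℝ (k:ℤ)
    have hc : ((k+2:ℕ):ℤ) = (k:ℤ)+2 := by push_cast; ring
    have hc1 : ((k+1:ℕ):ℤ) = (k:ℤ)+1 := by push_cast; ring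
    rw [hc1] at ih2
    constructor
    · rw [hc, h]
      simp only [eval_sub, eval_mul, eval_ofNat, eval_X, ih1.1, ih2.1]
      push_cast; ring
    · rw [hc, h]
      simp only [eval_sub, eval_mul, eval_ofNat, eval_X, ih1.2, ih2.2]
      push_cast; ring

private lemma U_eval_abs_le (n : ℕ) {t : ℝ} (ht : |t| ≤ 1) : |(Chebyshev.U ℝ (n:ℤ)).eval t| ≤ n+1 := by
  by_cases h : |t| = 1
  · rcases (abs_eq (by norm_num : (0:ℝ) ≤ 1)).mp h with h1 | h1
    · rw [h1, (U_eval_pm n).1, abs_of_nonneg (by positivity)]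
    · rw [h1, (U_eval_pm n).2, abs_mul, abs_pow, abs_neg, abs_one, one_pow, one_mul,
        abs_of_nonneg (by positivity : (0:ℝ) ≤ (n:ℝ)+1)]
  · have h1 : |t| < 1 := lt_of_le_of_ne ht h
    obtain ⟨ha, hb⟩ := abs_lt.mp h1
    have hc : Real.cos (Real.arccos t) = t := Real.cos_arccos (le_of_lt ha) (le_of_lt hb)
    have hspos : 0 < Real.sin (Real.arccos t) := by
      rw [Real.sin_arccos]
      apply Real.sqrt_pos.mpr; nlinarith
    have key := Chebyshev.U_real_cos (Real.arccos t) (n:ℤ)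
    rw [hc] at key
    push_cast at key
    have hball := sin_nat_bound (Real.arccos t) (n+1)
    push_cast at hball
    have habs : |(Chebyshev.U ℝ (n:ℤ)).eval t| * Real.sin (Real.arccos t) = |Real.sin (((n:ℝ)+1) * Real.arccos t)| := by
      rw [← key, abs_mul, abs_of_pos hspos]
    have hfin : |(Chebyshev.U ℝ (n:ℤ)).eval t| * Real.sin (Real.arccos t) ≤ ((n:ℝ)+1) * Real.sin (Real.arccos t) := by
      rw [habs]
      calc |Real.sin (((n:ℝ)+1) * Real.arccos t)| ≤ ((n:ℝ)+1) * |Real.sin (Real.arccos t)| := hball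
        _ = ((n:ℝ)+1) * Real.sin (Real.arccos t) := by rw [abs_of_pos hspos]
    exact le_of_mul_le_mul_right hfin hspos

set_option maxHeartbeats 1000000 in
private theorem rec9 (x y z : ℝ) (ux uy uz : ℕ → ℝ)
    (hx : ∀ m, ux (m+2) = 2*x*ux (m+1) - ux m)
    (hy : ∀ m, uy (m+2) = 2*y*uy (m+1) - uy m)
    (hz : ∀ m, uz (m+2) = 2*z*uz (m+1) - uz m) (n : ℕ) :
    (1:ℝ) * (ux n * uy n * uz n) +
    (-8*x*y*z) * (ux (n+1) * uy (n+1) * uz (n+1)) +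
    (4 - 8*z^2 - 8*y^2 + 16*y^2*z^2 - 8*x^2 + 16*x^2*z^2 + 16*x^2*y^2) * (ux (n+2) * uy (n+2) * uz (n+2)) +
    (40*x*y*z - 32*x*y*z^3 - 32*x*y^3*z - 32*x^3*y*z) * (ux (n+3) * uy (n+3) * uz (n+3)) +
    (6 - 16*z^2 + 16*z^4 - 16*y^2 + 16*y^4 - 16*x^2 + 64*x^2*y^2*z^2 + 16*x^4) * (ux (n+4) * uy (n+4) * uz (n+4)) +
    (40*x*y*z - 32*x*y*z^3 - 32*x*y^3*z - 32*x^3*y*z) * (ux (n+5) * uy (n+5) * uz (n+5)) +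
    (4 - 8*z^2 - 8*y^2 + 16*y^2*z^2 - 8*x^2 + 16*x^2*z^2 + 16*x^2*y^2) * (ux (n+6) * uy (n+6) * uz (n+6)) +
    (-8*x*y*z) * (ux (n+7) * uy (n+7) * uz (n+7)) +
    (1:ℝ) * (ux (n+8) * uy (n+8) * uz (n+8)) = 0 := by
  have hx8 : ux (n+8) = 2*x*ux (n+7) - ux (n+6) := hx (n+6)
  have hx7 : ux (n+7) = 2*x*ux (n+6) - ux (n+5) := hx (n+5)
  have hx6 : ux (n+6) = 2*x*ux (n+5) - ux (n+4) := hx (n+4)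
  have hx5 : ux (n+5) = 2*x*ux (n+4) - ux (n+3) := hx (n+3)
  have hx4 : ux (n+4) = 2*x*ux (n+3) - ux (n+2) := hx (n+2)
  have hx3 : ux (n+3) = 2*x*ux (n+2) - ux (n+1) := hx (n+1)
  have hx2 : ux (n+2) = 2*x*ux (n+1) - ux (n+0) := hx (n+0)
  have hy8 : uy (n+8) = 2*y*uy (n+7) - uy (n+6) := hy (n+6)
  have hy7 : uy (n+7) = 2*y*uy (n+6) - uy (n+5) := hy (n+5)
  have hy6 : uy (n+6) = 2*y*uy (n+5) - uy (n+4) := hy (n+4)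
  have hy5 : uy (n+5) = 2*y*uy (n+4) - uy (n+3) := hy (n+3)
  have hy4 : uy (n+4) = 2*y*uy (n+3) - uy (n+2) := hy (n+2)
  have hy3 : uy (n+3) = 2*y*uy (n+2) - uy (n+1) := hy (n+1)
  have hy2 : uy (n+2) = 2*y*uy (n+1) - uy (n+0) := hy (n+0)
  have hz8 : uz (n+8) = 2*z*uz (n+7) - uz (n+6) := hz (n+6)
  have hz7 : uz (n+7) = 2*z*uz (n+6) - uz (n+5) := hz (n+5)
  have hz6 : uz (n+6) = 2*z*uz (n+5) - uz (n+4) := hz (n+4)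
  have hz5 : uz (n+5) = 2*z*uz (n+4) - uz (n+3) := hz (n+3)
  have hz4 : uz (n+4) = 2*z*uz (n+3) - uz (n+2) := hz (n+2)
  have hz3 : uz (n+3) = 2*z*uz (n+2) - uz (n+1) := hz (n+1)
  have hz2 : uz (n+2) = 2*z*uz (n+1) - uz (n+0) := hz (n+0)
  rw [hx8, hy8, hz8, hx7, hy7, hz7, hx6, hy6, hz6, hx5, hy5, hz5, hx4, hy4, hz4, hx3, hy3, hz3, hx2, hy2, hz2]
  ring

set_option maxHeartbeats 20000000 in
theorem chebyshev_U_U_U_gen_fun (x y z ρ : ℝ)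
    (hx : |x| ≤ 1) (hy : |y| ≤ 1) (hz : |z| ≤ 1) (hρ : |ρ| < 1) :
    ∑' i : ℕ, ρ ^ i * (Chebyshev.U ℝ (i : ℤ)).eval x * (Chebyshev.U ℝ (i : ℤ)).eval y *
        (Chebyshev.U ℝ (i : ℤ)).eval z =
      ((1 + ρ ^ 2) ^ 3 + 16 * ρ ^ 3 * (x * y * z) -
          4 * ρ ^ 2 * (1 + ρ ^ 2) * (x ^ 2 + y ^ 2 + z ^ 2)) /
        (16 * ρ ^ 4 * (x ^ 4 + y ^ 4 + z ^ 4) -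
          8 * ρ ^ 2 * (1 + ρ ^ 2) ^ 2 * (x ^ 2 + y ^ 2 + z ^ 2) +
          16 * ρ ^ 2 * (1 + ρ ^ 4) * (x ^ 2 * y ^ 2 + x ^ 2 * z ^ 2 + y ^ 2 * z ^ 2) +
          64 * ρ ^ 4 * x ^ 2 * y ^ 2 * z ^ 2 -
          32 * ρ ^ 3 * (1 + ρ ^ 2) * (x * y * z) * (x ^ 2 + y ^ 2 + z ^ 2) -
          8 * ρ * (1 + ρ ^ 2) * (1 + ρ ^ 4 - 6 * ρ ^ 2) * (x * y * z) + (1 + ρ ^ 2) ^ 4) := by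
  -- local sequences
  obtain ⟨ux, hux⟩ : ∃ g : ℕ → ℝ, ∀ m:ℕ, g m = (Chebyshev.U ℝ (m:ℤ)).eval x := ⟨_, fun _ => rfl⟩
  obtain ⟨uy, huy⟩ : ∃ g : ℕ → ℝ, ∀ m:ℕ, g m = (Chebyshev.U ℝ (m:ℤ)).eval y := ⟨_, fun _ => rfl⟩
  obtain ⟨uz, huz⟩ : ∃ g : ℕ → ℝ, ∀ m:ℕ, g m = (Chebyshev.U ℝ (m:ℤ)).eval z := ⟨_, fun _ => rfl⟩
  obtain ⟨f, hf⟩ : ∃ g : ℕ → ℝ, ∀ m:ℕ, g m = ux m * uy m * uz m := ⟨_, fun _ => rfl⟩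
  obtain ⟨S, hS⟩ : ∃ s:ℝ, s = ∑' i:ℕ, ρ^i * f i := ⟨_, rfl⟩
  have hL : (∑' i : ℕ, ρ ^ i * (Chebyshev.U ℝ (i : ℤ)).eval x * (Chebyshev.U ℝ (i : ℤ)).eval y *
      (Chebyshev.U ℝ (i : ℤ)).eval z) = S := by
    rw [hS]
    exact tsum_congr fun i => by rw [hf i, hux i, huy i, huz i]; ring
  rw [hL]
  -- positivity of denominator
  obtain ⟨hy1, hy2⟩ := abs_le.mp hy
  obtain ⟨hz1, hz2⟩ := abs_le.mp hz
  obtain ⟨hx1, hx2⟩ := abs_le.mp hx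
  have hysq : y^2 ≤ 1 := by nlinarith
  have hzsq : z^2 ≤ 1 := by nlinarith
  have hxsq : x^2 ≤ 1 := by nlinarith
  have hK : (0:ℝ) ≤ (1-y^2)*(1-z^2) := mul_nonneg (by linarith) (by linarith)
  obtain ⟨s, hs0, hs2⟩ : ∃ s:ℝ, 0 ≤ s ∧ s^2 = (1-y^2)*(1-z^2) := ⟨Real.sqrt _, Real.sqrt_nonneg _, Real.sq_sqrt hK⟩
  have hyz1 : -1 ≤ y*z := by nlinarith [sq_nonneg (y+z)]
  have hyz2 : y*z ≤ 1 := by nlinarith [sq_nonneg (y-z)]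
  have hd1 : |y*z - s| ≤ 1 := by
    rw [abs_le]
    constructor
    · nlinarith [sq_nonneg (y+z)]
    · linarith
  have hd2 : |y*z + s| ≤ 1 := by
    rw [abs_le]
    constructor
    · linarith
    · nlinarith [sq_nonneg (y-z)]
  obtain ⟨hρ1, hρ2⟩ := abs_lt.mp hρ
  have hF : ∀ d:ℝ, |d| ≤ 1 → 0 < (1+ρ^2)^2 - 4*ρ*(1+ρ^2)*x*d + 4*ρ^2*(x^2 + d^2 - 1) := by
    intro d hd
    obtain ⟨hda, hdb⟩ := abs_le.mp hd
    have hdsq : d^2 ≤ 1 := by nlinarith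
    rcases le_or_gt 0 ρ with h | h
    · have hm : 0 ≤ 2 - x^2 - d^2 := by linarith
      have hw : (1-ρ)^2 + ρ*(2 - x^2 - d^2) ≤ 1 + ρ^2 - 2*ρ*(x*d) := by
        nlinarith [mul_nonneg h (sq_nonneg (x - d))]
      have hw0 : 0 ≤ (1-ρ)^2 + ρ*(2 - x^2 - d^2) := add_nonneg (sq_nonneg _) (mul_nonneg h hm)
      have hww : ((1-ρ)^2 + ρ*(2-x^2-d^2))^2 ≤ (1 + ρ^2 - 2*ρ*(x*d))^2 := pow_le_pow_left₀ hw0 hw 2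
      have hKm : 4*((1-x^2)*(1-d^2)) ≤ (2-x^2-d^2)^2 := by nlinarith [sq_nonneg (x^2 - d^2)]
      nlinarith [hww, mul_le_mul_of_nonneg_left hKm (sq_nonneg ρ),
        mul_nonneg (mul_nonneg (sq_nonneg (1-ρ)) h) hm, pow_pos (by linarith : (0:ℝ) < 1 - ρ) 4]
    · have hm : 0 ≤ 2 - x^2 - d^2 := by linarith
      have hnρ : 0 ≤ -ρ := by linarith
      have hw : (1+ρ)^2 + (-ρ)*(2 - x^2 - d^2) ≤ 1 + ρ^2 - 2*ρ*(x*d) := by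
        nlinarith [mul_nonneg hnρ (sq_nonneg (x + d))]
      have hw0 : 0 ≤ (1+ρ)^2 + (-ρ)*(2 - x^2 - d^2) := add_nonneg (sq_nonneg _) (mul_nonneg hnρ hm)
      have hww : ((1+ρ)^2 + (-ρ)*(2-x^2-d^2))^2 ≤ (1 + ρ^2 - 2*ρ*(x*d))^2 := pow_le_pow_left₀ hw0 hw 2
      have hKm : 4*((1-x^2)*(1-d^2)) ≤ (2-x^2-d^2)^2 := by nlinarith [sq_nonneg (x^2 - d^2)]
      nlinarith [hww, mul_le_mul_of_nonneg_left hKm (sq_nonneg ρ),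
        mul_nonneg (mul_nonneg (sq_nonneg (1+ρ)) hnρ) hm, pow_pos (by linarith : (0:ℝ) < 1 + ρ) 4]
  have hF1 := hF (y*z - s) hd1
  have hF2 := hF (y*z + s) hd2
  have hfac : ((1+ρ^2)^2 - 4*ρ*(1+ρ^2)*x*(y*z - s) + 4*ρ^2*(x^2 + (y*z - s)^2 - 1)) *
      ((1+ρ^2)^2 - 4*ρ*(1+ρ^2)*x*(y*z + s) + 4*ρ^2*(x^2 + (y*z + s)^2 - 1)) = (16 * ρ ^ 4 * (x ^ 4 + y ^ 4 + z ^ 4) - 8 * ρ ^ 2 * (1 + ρ ^ 2) ^ 2 * (x ^ 2 + y ^ 2 + z ^ 2) + 16 * ρ ^ 2 * (1 + ρ ^ 4) * (x ^ 2 * y ^ 2 + x ^ 2 * z ^ 2 + y ^ 2 * z ^ 2) + 64 * ρ ^ 4 * x ^ 2 * y ^ 2 * z ^ 2 - 32 * ρ ^ 3 * (1 + ρ ^ 2) * (x * y * z) * (x ^ 2 + y ^ 2 + z ^ 2) - 8 * ρ * (1 + ρ ^ 2) * (1 + ρ ^ 4 - 6 * ρ ^ 2) * (x * y * z) + (1 +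 ρ ^ 2) ^ 4) := by
    linear_combination (8*ρ^2*((1+ρ^2)^2 - 4*ρ*(1+ρ^2)*x*(y*z) + 4*ρ^2*(x^2 + (y*z)^2 - 1))
      - (4*ρ*(1+ρ^2)*x - 8*ρ^2*(y*z))^2 + 16*ρ^4*(s^2 + (1-y^2)*(1-z^2))) * hs2
  have hD : 0 < (16 * ρ ^ 4 * (x ^ 4 + y ^ 4 + z ^ 4) - 8 * ρ ^ 2 * (1 + ρ ^ 2) ^ 2 * (x ^ 2 + y ^ 2 + z ^ 2) + 16 * ρ ^ 2 * (1 + ρ ^ 4) * (x ^ 2 * y ^ 2 + x ^ 2 * z ^ 2 + y ^ 2 * z ^ 2) + 64 * ρ ^ 4 * x ^ 2 * y ^ 2 * z ^ 2 - 32 * ρ ^ 3 * (1 + ρ ^ 2) * (x * y * z) * (x ^ 2 + y ^ 2 + z ^ 2) - 8 * ρ * (1 + ρ ^ 2) * (1 + ρ ^ 4 - 6 * ρ ^ 2) * (x * y * z) + (1 + ρ ^ 2) ^ 4) := by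
    rw [← hfac]
    exact mul_pos hF1 hF2
  -- recurrences
  have hxr : ∀ m:ℕ, ux (m+2) = 2*x*ux (m+1) - ux m := by
    intro m
    rw [hux (m+2), hux (m+1), hux m]
    have hc : ((m+2:ℕ):ℤ) = (m:ℤ)+2 := by push_cast; ring
    have hc1 : ((m+1:ℕ):ℤ) = (m:ℤ)+1 := by push_cast; ring
    rw [hc, hc1, Chebyshev.U_add_two]
    simp [eval_sub, eval_mul, eval_ofNat, eval_X]
  have hyr : ∀ m:ℕ, uy (m+2) = 2*y*uy (m+1) - uy m := by
    intro m
    rw [huy (m+2), huy (m+1), huy m]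
    have hc : ((m+2:ℕ):ℤ) = (m:ℤ)+2 := by push_cast; ring
    have hc1 : ((m+1:ℕ):ℤ) = (m:ℤ)+1 := by push_cast; ring
    rw [hc, hc1, Chebyshev.U_add_two]
    simp [eval_sub, eval_mul, eval_ofNat, eval_X]
  have hzr : ∀ m:ℕ, uz (m+2) = 2*z*uz (m+1) - uz m := by
    intro m
    rw [huz (m+2), huz (m+1), huz m]
    have hc : ((m+2:ℕ):ℤ) = (m:ℤ)+2 := by push_cast; ring
    have hc1 : ((m+1:ℕ):ℤ) = (m:ℤ)+1 := by push_cast; ring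
    rw [hc, hc1, Chebyshev.U_add_two]
    simp [eval_sub, eval_mul, eval_ofNat, eval_X]
  -- summability
  have hfb : ∀ n:ℕ, |f n| ≤ ((n:ℝ)+1)^3 := by
    intro n
    rw [hf n, hux n, huy n, huz n, abs_mul, abs_mul]
    have b1 := U_eval_abs_le n hx
    have b2 := U_eval_abs_le n hy
    have b3 := U_eval_abs_le n hz
    have n1 : (0:ℝ) ≤ (n:ℝ)+1 := by positivity
    nlinarith [abs_nonneg ((Chebyshev.U ℝ (n:ℤ)).eval x), abs_nonneg ((Chebyshev.U ℝ (n:ℤ)).eval y),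
      abs_nonneg ((Chebyshev.U ℝ (n:ℤ)).eval z),
      mul_le_mul b1 b2 (abs_nonneg _) n1,
      mul_le_mul (mul_le_mul b1 b2 (abs_nonneg _) n1) b3 (abs_nonneg _) (by positivity : (0:ℝ) ≤ ((n:ℝ)+1)*((n:ℝ)+1))]
  have hgsum : Summable (fun n:ℕ => ρ^n * f n) := by
    refine Summable.of_norm_bounded (g := fun n:ℕ => 8*((n:ℝ)^3*|ρ|^n) + 8*|ρ|^n) ?_ ?_
    · refine Summable.add ?_ ?_
      · exact (summable_pow_mul_geometric_of_norm_lt_one 3 (by rw [Real.norm_eq_abs, abs_abs]; exact hρ)).mul_left 8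
      · exact (summable_geometric_of_lt_one (abs_nonneg ρ) hρ).mul_left 8
    · intro n
      show ‖ρ^n * f n‖ ≤ 8*((n:ℝ)^3*|ρ|^n) + 8*|ρ|^n
      rw [Real.norm_eq_abs, abs_mul, abs_pow]
      have hb := hfb n
      have h8 : ((n:ℝ)+1)^3 ≤ 8*(n:ℝ)^3+8 := by
        nlinarith [mul_nonneg (Nat.cast_nonneg (α := ℝ) n) (sq_nonneg ((n:ℝ)-1)), sq_nonneg ((n:ℝ)-1), Nat.cast_nonneg (α := ℝ) n]
      have hp : (0:ℝ) ≤ |ρ|^n := pow_nonneg (abs_nonneg ρ) n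
      nlinarith [mul_le_mul_of_nonneg_left hb hp, mul_le_mul_of_nonneg_left h8 hp]
  have hrecf : ∀ n:ℕ, (1:ℝ) * (f n) + (-8*x*y*z) * (f (n+1)) + (4 - 8*z^2 - 8*y^2 + 16*y^2*z^2 - 8*x^2 + 16*x^2*z^2 + 16*x^2*y^2) * (f (n+2)) + (40*x*y*z - 32*x*y*z^3 - 32*x*y^3*z - 32*x^3*y*z) * (f (n+3)) + (6 - 16*z^2 + 16*z^4 - 16*y^2 + 16*y^4 - 16*x^2 + 64*x^2*y^2*z^2 + 16*x^4) * (f (n+4)) + (40*x*y*z - 32*x*y*z^3 - 32*x*y^3*z - 32*x^3*y*z) * (f (n+5)) + (4 - 8*z^2 - 8*y^2 + 16*y^2*z^2 - 8*x^2 + 16*x^2*z^2 + 16*x^2*y^2) * (f (n+6)) + (-8*x*y*z) * (f (n+7)) + (1:ℝ) * (f (n+8)) = 0 := by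
    intro n
    have h := rec9 x y z ux uy uz hxr hyr hzr n
    simp only [hf] at *
    exact h
  have t0 : (∑' n:ℕ, ρ^n * f n) = S - 0 := by rw [sub_zero, hS]
  have t1 : (∑' n:ℕ, ρ^(n+1) * f (n+1)) = S - (ρ^0 * f 0) := by
    have h := Summable.sum_add_tsum_nat_add (f := fun n:ℕ => ρ^n * f n) 1 hgsum
    simp only [Finset.sum_range_succ, Finset.sum_range_zero, zero_add] at h
    rw [hS]
    linarith [h]
  have t2 : (∑' n:ℕ, ρ^(n+2) * f (n+2)) = S - (ρ^0 * f 0 + ρ^1 * f 1) := by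
    have h := Summable.sum_add_tsum_nat_add (f := fun n:ℕ => ρ^n * f n) 2 hgsum
    simp only [Finset.sum_range_succ, Finset.sum_range_zero, zero_add] at h
    rw [hS]
    linarith [h]
  have t3 : (∑' n:ℕ, ρ^(n+3) * f (n+3)) = S - (ρ^0 * f 0 + ρ^1 * f 1 + ρ^2 * f 2) := by
    have h := Summable.sum_add_tsum_nat_add (f := fun n:ℕ => ρ^n * f n) 3 hgsum
    simp only [Finset.sum_range_succ, Finset.sum_range_zero, zero_add] at h
    rw [hS]
    linarith [h]
  have t4 : (∑' n:ℕ, ρ^(n+4) * f (n+4)) = S - (ρ^0 * f 0 + ρ^1 * f 1 + ρ^2 * f 2 + ρ^3 * f 3) := by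
    have h := Summable.sum_add_tsum_nat_add (f := fun n:ℕ => ρ^n * f n) 4 hgsum
    simp only [Finset.sum_range_succ, Finset.sum_range_zero, zero_add] at h
    rw [hS]
    linarith [h]
  have t5 : (∑' n:ℕ, ρ^(n+5) * f (n+5)) = S - (ρ^0 * f 0 + ρ^1 * f 1 + ρ^2 * f 2 + ρ^3 * f 3 + ρ^4 * f 4) := by
    have h := Summable.sum_add_tsum_nat_add (f := fun n:ℕ => ρ^n * f n) 5 hgsum
    simp only [Finset.sum_range_succ, Finset.sum_range_zero, zero_add] at h
    rw [hS]
    linarith [h]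
  have t6 : (∑' n:ℕ, ρ^(n+6) * f (n+6)) = S - (ρ^0 * f 0 + ρ^1 * f 1 + ρ^2 * f 2 + ρ^3 * f 3 + ρ^4 * f 4 + ρ^5 * f 5) := by
    have h := Summable.sum_add_tsum_nat_add (f := fun n:ℕ => ρ^n * f n) 6 hgsum
    simp only [Finset.sum_range_succ, Finset.sum_range_zero, zero_add] at h
    rw [hS]
    linarith [h]
  have t7 : (∑' n:ℕ, ρ^(n+7) * f (n+7)) = S - (ρ^0 * f 0 + ρ^1 * f 1 + ρ^2 * f 2 + ρ^3 * f 3 + ρ^4 * f 4 + ρ^5 * f 5 + ρ^6 * f 6) := by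
    have h := Summable.sum_add_tsum_nat_add (f := fun n:ℕ => ρ^n * f n) 7 hgsum
    simp only [Finset.sum_range_succ, Finset.sum_range_zero, zero_add] at h
    rw [hS]
    linarith [h]
  have t8 : (∑' n:ℕ, ρ^(n+8) * f (n+8)) = S - (ρ^0 * f 0 + ρ^1 * f 1 + ρ^2 * f 2 + ρ^3 * f 3 + ρ^4 * f 4 + ρ^5 * f 5 + ρ^6 * f 6 + ρ^7 * f 7) := by
    have h := Summable.sum_add_tsum_nat_add (f := fun n:ℕ => ρ^n * f n) 8 hgsum
    simp only [Finset.sum_range_succ, Finset.sum_range_zero, zero_add] at h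
    rw [hS]
    linarith [h]
  have sc0 : Summable (fun n:ℕ => (1:ℝ) * ρ^8 * (ρ^n * f n)) := hgsum.mul_left _
  have sh1 : Summable (fun n:ℕ => ρ^(n+1) * f (n+1)) := (summable_nat_add_iff (f := fun n:ℕ => ρ^n * f n) 1).mpr hgsum
  have sc1 : Summable (fun n:ℕ => (-8*x*y*z) * ρ^7 * (ρ^(n+1) * f (n+1))) := sh1.mul_left _
  have sh2 : Summable (fun n:ℕ => ρ^(n+2) * f (n+2)) := (summable_nat_add_iff (f := fun n:ℕ => ρ^n * f n) 2).mpr hgsum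
  have sc2 : Summable (fun n:ℕ => (4 - 8*z^2 - 8*y^2 + 16*y^2*z^2 - 8*x^2 + 16*x^2*z^2 + 16*x^2*y^2) * ρ^6 * (ρ^(n+2) * f (n+2))) := sh2.mul_left _
  have sh3 : Summable (fun n:ℕ => ρ^(n+3) * f (n+3)) := (summable_nat_add_iff (f := fun n:ℕ => ρ^n * f n) 3).mpr hgsum
  have sc3 : Summable (fun n:ℕ => (40*x*y*z - 32*x*y*z^3 - 32*x*y^3*z - 32*x^3*y*z) * ρ^5 * (ρ^(n+3) * f (n+3))) := sh3.mul_left _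
  have sh4 : Summable (fun n:ℕ => ρ^(n+4) * f (n+4)) := (summable_nat_add_iff (f := fun n:ℕ => ρ^n * f n) 4).mpr hgsum
  have sc4 : Summable (fun n:ℕ => (6 - 16*z^2 + 16*z^4 - 16*y^2 + 16*y^4 - 16*x^2 + 64*x^2*y^2*z^2 + 16*x^4) * ρ^4 * (ρ^(n+4) * f (n+4))) := sh4.mul_left _
  have sh5 : Summable (fun n:ℕ => ρ^(n+5) * f (n+5)) := (summable_nat_add_iff (f := fun n:ℕ => ρ^n * f n) 5).mpr hgsum
  have sc5 : Summable (fun n:ℕ => (40*x*y*z - 32*x*y*z^3 - 32*x*y^3*z - 32*x^3*y*z) * ρ^3 * (ρ^(n+5) * f (n+5))) := sh5.mul_left _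
  have sh6 : Summable (fun n:ℕ => ρ^(n+6) * f (n+6)) := (summable_nat_add_iff (f := fun n:ℕ => ρ^n * f n) 6).mpr hgsum
  have sc6 : Summable (fun n:ℕ => (4 - 8*z^2 - 8*y^2 + 16*y^2*z^2 - 8*x^2 + 16*x^2*z^2 + 16*x^2*y^2) * ρ^2 * (ρ^(n+6) * f (n+6))) := sh6.mul_left _
  have sh7 : Summable (fun n:ℕ => ρ^(n+7) * f (n+7)) := (summable_nat_add_iff (f := fun n:ℕ => ρ^n * f n) 7).mpr hgsum
  have sc7 : Summable (fun n:ℕ => (-8*x*y*z) * ρ^1 * (ρ^(n+7) * f (n+7))) := sh7.mul_left _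
  have sh8 : Summable (fun n:ℕ => ρ^(n+8) * f (n+8)) := (summable_nat_add_iff (f := fun n:ℕ => ρ^n * f n) 8).mpr hgsum
  have sc8 : Summable (fun n:ℕ => (1:ℝ) * (ρ^(n+8) * f (n+8))) := sh8.mul_left _
  have g1 : Summable (fun n:ℕ => (1:ℝ) * ρ^8 * (ρ^n * f n) + (-8*x*y*z) * ρ^7 * (ρ^(n+1) * f (n+1))) := sc0.add sc1
  have g2 : Summable (fun n:ℕ => (1:ℝ) * ρ^8 * (ρ^n * f n) + (-8*x*y*z) * ρ^7 * (ρ^(n+1) * f (n+1)) + (4 - 8*z^2 - 8*y^2 + 16*y^2*z^2 - 8*x^2 + 16*x^2*z^2 + 16*x^2*y^2) * ρ^6 * (ρ^(n+2) * f (n+2))) := g1.add sc2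
  have g3 : Summable (fun n:ℕ => (1:ℝ) * ρ^8 * (ρ^n * f n) + (-8*x*y*z) * ρ^7 * (ρ^(n+1) * f (n+1)) + (4 - 8*z^2 - 8*y^2 + 16*y^2*z^2 - 8*x^2 + 16*x^2*z^2 + 16*x^2*y^2) * ρ^6 * (ρ^(n+2) * f (n+2)) + (40*x*y*z - 32*x*y*z^3 - 32*x*y^3*z - 32*x^3*y*z) * ρ^5 * (ρ^(n+3) * f (n+3))) := g2.add sc3
  have g4 : Summable (fun n:ℕ => (1:ℝ) * ρ^8 * (ρ^n * f n) + (-8*x*y*z) * ρ^7 * (ρ^(n+1) * f (n+1)) + (4 - 8*z^2 - 8*y^2 + 16*y^2*z^2 - 8*x^2 + 16*x^2*z^2 + 16*x^2*y^2) * ρ^6 * (ρ^(n+2) * f (n+2)) + (40*x*y*z - 32*x*y*z^3 - 32*x*y^3*z - 32*x^3*y*z) * ρ^5 * (ρ^(n+3) * f (n+3)) + (6 - 16*z^2 + 16*z^4 - 16*y^2 + 16*y^4 - 16*x^2 + 64*x^2*y^2*z^2 + 16*x^4) * ρ^4 * (ρ^(n+4) * f (n+4))) := g3.add sc4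
  have g5 : Summable (fun n:ℕ => (1:ℝ) * ρ^8 * (ρ^n * f n) + (-8*x*y*z) * ρ^7 * (ρ^(n+1) * f (n+1)) + (4 - 8*z^2 - 8*y^2 + 16*y^2*z^2 - 8*x^2 + 16*x^2*z^2 + 16*x^2*y^2) * ρ^6 * (ρ^(n+2) * f (n+2)) + (40*x*y*z - 32*x*y*z^3 - 32*x*y^3*z - 32*x^3*y*z) * ρ^5 * (ρ^(n+3) * f (n+3)) + (6 - 16*z^2 + 16*z^4 - 16*y^2 + 16*y^4 - 16*x^2 + 64*x^2*y^2*z^2 + 16*x^4) * ρ^4 * (ρ^(n+4) * f (n+4)) + (40*x*y*z - 32*x*y*z^3 - 32*x*y^3*z - 32*x^3*y*z) * ρ^3 * (ρ^(n+5) * f (n+5))) := g4.add sc5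
  have g6 : Summable (fun n:ℕ => (1:ℝ) * ρ^8 * (ρ^n * f n) + (-8*x*y*z) * ρ^7 * (ρ^(n+1) * f (n+1)) + (4 - 8*z^2 - 8*y^2 + 16*y^2*z^2 - 8*x^2 + 16*x^2*z^2 + 16*x^2*y^2) * ρ^6 * (ρ^(n+2) * f (n+2)) + (40*x*y*z - 32*x*y*z^3 - 32*x*y^3*z - 32*x^3*y*z) * ρ^5 * (ρ^(n+3) * f (n+3)) + (6 - 16*z^2 + 16*z^4 - 16*y^2 + 16*y^4 - 16*x^2 + 64*x^2*y^2*z^2 + 16*x^4) * ρ^4 * (ρ^(n+4) * f (n+4)) + (40*x*y*z - 32*x*y*z^3 - 32*x*y^3*z - 32*x^3*y*z) * ρ^3 * (ρ^(n+5) * f (n+5)) + (4 - 8*z^2 - 8*y^2 + 16*y^2*z^2 - 8*x^2 + 16*x^2*z^2 + 16*x^2*y^2) * ρ^2 * (ρ^(n+6) * f (n+6))) := g5.add sc6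
  have g7 : Summable (fun n:ℕ => (1:ℝ) * ρ^8 * (ρ^n * f n) + (-8*x*y*z) * ρ^7 * (ρ^(n+1) * f (n+1)) + (4 - 8*z^2 - 8*y^2 + 16*y^2*z^2 - 8*x^2 + 16*x^2*z^2 + 16*x^2*y^2) * ρ^6 * (ρ^(n+2) * f (n+2)) + (40*x*y*z - 32*x*y*z^3 - 32*x*y^3*z - 32*x^3*y*z) * ρ^5 * (ρ^(n+3) * f (n+3)) + (6 - 16*z^2 + 16*z^4 - 16*y^2 + 16*y^4 - 16*x^2 + 64*x^2*y^2*z^2 + 16*x^4) * ρ^4 * (ρ^(n+4) * f (n+4)) + (40*x*y*z - 32*x*y*z^3 - 32*x*y^3*z - 32*x^3*y*z) * ρ^3 * (ρ^(n+5) * f (n+5)) + (4 - 8*z^2 - 8*y^2 + 16*y^2*z^2 - 8*x^2 + 16*x^2*z^2 + 16*x^2*y^2) * ρ^2 * (ρ^(n+6) * f (n+6)) + (-8*x*y*z) * ρ^1 * (ρ^(n+7) * f (n+7))) := g6.add sc7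
  have g8 : Summable (fun n:ℕ => (1:ℝ) * ρ^8 * (ρ^n * f n) + (-8*x*y*z) * ρ^7 * (ρ^(n+1) * f (n+1)) + (4 - 8*z^2 - 8*y^2 + 16*y^2*z^2 - 8*x^2 + 16*x^2*z^2 + 16*x^2*y^2) * ρ^6 * (ρ^(n+2) * f (n+2)) + (40*x*y*z - 32*x*y*z^3 - 32*x*y^3*z - 32*x^3*y*z) * ρ^5 * (ρ^(n+3) * f (n+3)) + (6 - 16*z^2 + 16*z^4 - 16*y^2 + 16*y^4 - 16*x^2 + 64*x^2*y^2*z^2 + 16*x^4) * ρ^4 * (ρ^(n+4) * f (n+4)) + (40*x*y*z - 32*x*y*z^3 - 32*x*y^3*z - 32*x^3*y*z) * ρ^3 * (ρ^(n+5) * f (n+5)) + (4 - 8*z^2 - 8*y^2 + 16*y^2*z^2 - 8*x^2 + 16*x^2*z^2 + 16*x^2*y^2) * ρ^2 * (ρ^(n+6) * f (n+6)) + (-8*x*y*z) * ρ^1 * (ρ^(n+7) * f (n+7)) + (1:ℝ) * (ρ^(n+8) * f (n+8))) := g7.add sc8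
  have v0 : (∑' n:ℕ, (1:ℝ) * ρ^8 * (ρ^n * f n)) = (1:ℝ) * ρ^8 * (S - 0) := by rw [tsum_mul_left, t0]
  have v1 : (∑' n:ℕ, (-8*x*y*z) * ρ^7 * (ρ^(n+1) * f (n+1))) = (-8*x*y*z) * ρ^7 * (S - (ρ^0 * f 0)) := by rw [tsum_mul_left, t1]
  have v2 : (∑' n:ℕ, (4 - 8*z^2 - 8*y^2 + 16*y^2*z^2 - 8*x^2 + 16*x^2*z^2 + 16*x^2*y^2) * ρ^6 * (ρ^(n+2) * f (n+2))) = (4 - 8*z^2 - 8*y^2 + 16*y^2*z^2 - 8*x^2 + 16*x^2*z^2 + 16*x^2*y^2) * ρ^6 * (S - (ρ^0 * f 0 + ρ^1 * f 1)) := by rw [tsum_mul_left, t2]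
  have v3 : (∑' n:ℕ, (40*x*y*z - 32*x*y*z^3 - 32*x*y^3*z - 32*x^3*y*z) * ρ^5 * (ρ^(n+3) * f (n+3))) = (40*x*y*z - 32*x*y*z^3 - 32*x*y^3*z - 32*x^3*y*z) * ρ^5 * (S - (ρ^0 * f 0 + ρ^1 * f 1 + ρ^2 * f 2)) := by rw [tsum_mul_left, t3]
  have v4 : (∑' n:ℕ, (6 - 16*z^2 + 16*z^4 - 16*y^2 + 16*y^4 - 16*x^2 + 64*x^2*y^2*z^2 + 16*x^4) * ρ^4 * (ρ^(n+4) * f (n+4))) = (6 - 16*z^2 + 16*z^4 - 16*y^2 + 16*y^4 - 16*x^2 + 64*x^2*y^2*z^2 + 16*x^4) * ρ^4 * (S - (ρ^0 * f 0 + ρ^1 * f 1 + ρ^2 * f 2 + ρ^3 * f 3)) := by rw [tsum_mul_left, t4]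
  have v5 : (∑' n:ℕ, (40*x*y*z - 32*x*y*z^3 - 32*x*y^3*z - 32*x^3*y*z) * ρ^3 * (ρ^(n+5) * f (n+5))) = (40*x*y*z - 32*x*y*z^3 - 32*x*y^3*z - 32*x^3*y*z) * ρ^3 * (S - (ρ^0 * f 0 + ρ^1 * f 1 + ρ^2 * f 2 + ρ^3 * f 3 + ρ^4 * f 4)) := by rw [tsum_mul_left, t5]
  have v6 : (∑' n:ℕ, (4 - 8*z^2 - 8*y^2 + 16*y^2*z^2 - 8*x^2 + 16*x^2*z^2 + 16*x^2*y^2) * ρ^2 * (ρ^(n+6) * f (n+6))) = (4 - 8*z^2 - 8*y^2 + 16*y^2*z^2 - 8*x^2 + 16*x^2*z^2 + 16*x^2*y^2) * ρ^2 * (S - (ρ^0 * f 0 + ρ^1 * f 1 + ρ^2 * f 2 + ρ^3 * f 3 + ρ^4 * f 4 + ρ^5 * f 5)) := by rw [tsum_mul_left, t6]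
  have v7 : (∑' n:ℕ, (-8*x*y*z) * ρ^1 * (ρ^(n+7) * f (n+7))) = (-8*x*y*z) * ρ^1 * (S - (ρ^0 * f 0 + ρ^1 * f 1 + ρ^2 * f 2 + ρ^3 * f 3 + ρ^4 * f 4 + ρ^5 * f 5 + ρ^6 * f 6)) := by rw [tsum_mul_left, t7]
  have v8 : (∑' n:ℕ, (1:ℝ) * (ρ^(n+8) * f (n+8))) = (1:ℝ) * (S - (ρ^0 * f 0 + ρ^1 * f 1 + ρ^2 * f 2 + ρ^3 * f 3 + ρ^4 * f 4 + ρ^5 * f 5 + ρ^6 * f 6 + ρ^7 * f 7)) := by rw [tsum_mul_left, t8]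
  have ha8 : (∑' n:ℕ, ((1:ℝ) * ρ^8 * (ρ^n * f n) + (-8*x*y*z) * ρ^7 * (ρ^(n+1) * f (n+1)) + (4 - 8*z^2 - 8*y^2 + 16*y^2*z^2 - 8*x^2 + 16*x^2*z^2 + 16*x^2*y^2) * ρ^6 * (ρ^(n+2) * f (n+2)) + (40*x*y*z - 32*x*y*z^3 - 32*x*y^3*z - 32*x^3*y*z) * ρ^5 * (ρ^(n+3) * f (n+3)) + (6 - 16*z^2 + 16*z^4 - 16*y^2 + 16*y^4 - 16*x^2 + 64*x^2*y^2*z^2 + 16*x^4) * ρ^4 * (ρ^(n+4) * f (n+4)) + (40*x*y*z - 32*x*y*z^3 - 32*x*y^3*z - 32*x^3*y*z) * ρ^3 * (ρ^(n+5) * f (n+5)) + (4 - 8*z^2 - 8*y^2 + 16*y^2*z^2 - 8*x^2 + 16*x^2*z^2 + 16*x^2*y^2) * ρ^2 * (ρ^(n+6) * f (n+6)) + (-8*x*y*z) * ρ^1 * (ρ^(n+7) * f (n+7)) + (1:ℝ) * (ρ^(n+8) * f (n+8)))) = (∑' n:ℕ, ((1:ℝ) * ρ^8 * (ρ^n * f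 n) + (-8*x*y*z) * ρ^7 * (ρ^(n+1) * f (n+1)) + (4 - 8*z^2 - 8*y^2 + 16*y^2*z^2 - 8*x^2 + 16*x^2*z^2 + 16*x^2*y^2) * ρ^6 * (ρ^(n+2) * f (n+2)) + (40*x*y*z - 32*x*y*z^3 - 32*x*y^3*z - 32*x^3*y*z) * ρ^5 * (ρ^(n+3) * f (n+3)) + (6 - 16*z^2 + 16*z^4 - 16*y^2 + 16*y^4 - 16*x^2 + 64*x^2*y^2*z^2 + 16*x^4) * ρ^4 * (ρ^(n+4) * f (n+4)) + (40*x*y*z - 32*x*y*z^3 - 32*x*y^3*z - 32*x^3*y*z) * ρ^3 * (ρ^(n+5) * f (n+5)) + (4 - 8*z^2 - 8*y^2 + 16*y^2*z^2 - 8*x^2 + 16*x^2*z^2 + 16*x^2*y^2) * ρ^2 * (ρ^(n+6) * f (n+6)) + (-8*x*y*z) * ρ^1 * (ρ^(n+7) * f (n+7)))) + (∑' n:ℕ, (1:ℝ) * (ρ^(n+8) * f (n+8))) := Summable.tsum_add g7 sc8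
  have ha7 : (∑' n:ℕ, ((1:ℝ) * ρ^8 * (ρ^n * f n) + (-8*x*y*z) * ρ^7 * (ρ^(n+1) * f (n+1)) + (4 - 8*z^2 - 8*y^2 + 16*y^2*z^2 - 8*x^2 + 16*x^2*z^2 + 16*x^2*y^2) * ρ^6 * (ρ^(n+2) * f (n+2)) + (40*x*y*z - 32*x*y*z^3 - 32*x*y^3*z - 32*x^3*y*z) * ρ^5 * (ρ^(n+3) * f (n+3)) + (6 - 16*z^2 + 16*z^4 - 16*y^2 + 16*y^4 - 16*x^2 + 64*x^2*y^2*z^2 + 16*x^4) * ρ^4 * (ρ^(n+4) * f (n+4)) + (40*x*y*z - 32*x*y*z^3 - 32*x*y^3*z - 32*x^3*y*z) * ρ^3 * (ρ^(n+5) * f (n+5)) + (4 - 8*z^2 - 8*y^2 + 16*y^2*z^2 - 8*x^2 + 16*x^2*z^2 + 16*x^2*y^2) * ρ^2 * (ρ^(n+6) * f (n+6)) + (-8*x*y*z) * ρ^1 * (ρ^(n+7) * f (n+7)))) = (∑' n:ℕ, ((1:ℝ) * ρ^8 * (ρ^n * f n) + (-8*x*y*z) * ρ^7 * (ρ^(n+1)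 * f (n+1)) + (4 - 8*z^2 - 8*y^2 + 16*y^2*z^2 - 8*x^2 + 16*x^2*z^2 + 16*x^2*y^2) * ρ^6 * (ρ^(n+2) * f (n+2)) + (40*x*y*z - 32*x*y*z^3 - 32*x*y^3*z - 32*x^3*y*z) * ρ^5 * (ρ^(n+3) * f (n+3)) + (6 - 16*z^2 + 16*z^4 - 16*y^2 + 16*y^4 - 16*x^2 + 64*x^2*y^2*z^2 + 16*x^4) * ρ^4 * (ρ^(n+4) * f (n+4)) + (40*x*y*z - 32*x*y*z^3 - 32*x*y^3*z - 32*x^3*y*z) * ρ^3 * (ρ^(n+5) * f (n+5)) + (4 - 8*z^2 - 8*y^2 + 16*y^2*z^2 - 8*x^2 + 16*x^2*z^2 + 16*x^2*y^2) * ρ^2 * (ρ^(n+6) * f (n+6)))) + (∑' n:ℕ, (-8*x*y*z) * ρ^1 * (ρ^(n+7) * f (n+7))) := Summable.tsum_add g6 sc7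
  have ha6 : (∑' n:ℕ, ((1:ℝ) * ρ^8 * (ρ^n * f n) + (-8*x*y*z) * ρ^7 * (ρ^(n+1) * f (n+1)) + (4 - 8*z^2 - 8*y^2 + 16*y^2*z^2 - 8*x^2 + 16*x^2*z^2 + 16*x^2*y^2) * ρ^6 * (ρ^(n+2) * f (n+2)) + (40*x*y*z - 32*x*y*z^3 - 32*x*y^3*z - 32*x^3*y*z) * ρ^5 * (ρ^(n+3) * f (n+3)) + (6 - 16*z^2 + 16*z^4 - 16*y^2 + 16*y^4 - 16*x^2 + 64*x^2*y^2*z^2 + 16*x^4) * ρ^4 * (ρ^(n+4) * f (n+4)) + (40*x*y*z - 32*x*y*z^3 - 32*x*y^3*z - 32*x^3*y*z) * ρ^3 * (ρ^(n+5) * f (n+5)) + (4 - 8*z^2 - 8*y^2 + 16*y^2*z^2 - 8*x^2 + 16*x^2*z^2 + 16*x^2*y^2) * ρ^2 * (ρ^(n+6) * f (n+6)))) = (∑' n:ℕ, ((1:ℝ) * ρ^8 * (ρ^n * f n) + (-8*x*y*z) * ρ^7 * (ρ^(n+1) * f (n+1)) + (4 - 8*z^2 - 8*y^2 + 16*y^2*z^2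 - 8*x^2 + 16*x^2*z^2 + 16*x^2*y^2) * ρ^6 * (ρ^(n+2) * f (n+2)) + (40*x*y*z - 32*x*y*z^3 - 32*x*y^3*z - 32*x^3*y*z) * ρ^5 * (ρ^(n+3) * f (n+3)) + (6 - 16*z^2 + 16*z^4 - 16*y^2 + 16*y^4 - 16*x^2 + 64*x^2*y^2*z^2 + 16*x^4) * ρ^4 * (ρ^(n+4) * f (n+4)) + (40*x*y*z - 32*x*y*z^3 - 32*x*y^3*z - 32*x^3*y*z) * ρ^3 * (ρ^(n+5) * f (n+5)))) + (∑' n:ℕ, (4 - 8*z^2 - 8*y^2 + 16*y^2*z^2 - 8*x^2 + 16*x^2*z^2 + 16*x^2*y^2) * ρ^2 * (ρ^(n+6) * f (n+6))) := Summable.tsum_add g5 sc6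
  have ha5 : (∑' n:ℕ, ((1:ℝ) * ρ^8 * (ρ^n * f n) + (-8*x*y*z) * ρ^7 * (ρ^(n+1) * f (n+1)) + (4 - 8*z^2 - 8*y^2 + 16*y^2*z^2 - 8*x^2 + 16*x^2*z^2 + 16*x^2*y^2) * ρ^6 * (ρ^(n+2) * f (n+2)) + (40*x*y*z - 32*x*y*z^3 - 32*x*y^3*z - 32*x^3*y*z) * ρ^5 * (ρ^(n+3) * f (n+3)) + (6 - 16*z^2 + 16*z^4 - 16*y^2 + 16*y^4 - 16*x^2 + 64*x^2*y^2*z^2 + 16*x^4) * ρ^4 * (ρ^(n+4) * f (n+4)) + (40*x*y*z - 32*x*y*z^3 - 32*x*y^3*z - 32*x^3*y*z) * ρ^3 * (ρ^(n+5) * f (n+5)))) = (∑' n:ℕ, ((1:ℝ) * ρ^8 * (ρ^n * f n) + (-8*x*y*z) * ρ^7 * (ρ^(n+1) * f (n+1)) + (4 - 8*z^2 - 8*y^2 + 16*y^2*z^2 - 8*x^2 + 16*x^2*z^2 + 16*x^2*y^2) * ρ^6 * (ρ^(n+2) * f (n+2)) + (40*x*y*z - 32*x*y*z^3 - 32*x*y^3*z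 - 32*x^3*y*z) * ρ^5 * (ρ^(n+3) * f (n+3)) + (6 - 16*z^2 + 16*z^4 - 16*y^2 + 16*y^4 - 16*x^2 + 64*x^2*y^2*z^2 + 16*x^4) * ρ^4 * (ρ^(n+4) * f (n+4)))) + (∑' n:ℕ, (40*x*y*z - 32*x*y*z^3 - 32*x*y^3*z - 32*x^3*y*z) * ρ^3 * (ρ^(n+5) * f (n+5))) := Summable.tsum_add g4 sc5
  have ha4 : (∑' n:ℕ, ((1:ℝ) * ρ^8 * (ρ^n * f n) + (-8*x*y*z) * ρ^7 * (ρ^(n+1) * f (n+1)) + (4 - 8*z^2 - 8*y^2 + 16*y^2*z^2 - 8*x^2 + 16*x^2*z^2 + 16*x^2*y^2) * ρ^6 * (ρ^(n+2) * f (n+2)) + (40*x*y*z - 32*x*y*z^3 - 32*x*y^3*z - 32*x^3*y*z) * ρ^5 * (ρ^(n+3) * f (n+3)) + (6 - 16*z^2 + 16*z^4 - 16*y^2 + 16*y^4 - 16*x^2 + 64*x^2*y^2*z^2 + 16*x^4) * ρ^4 * (ρ^(n+4) * f (n+4)))) = (∑' n:ℕ, ((1:ℝ) * ρ^8 * (ρ^n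 * f n) + (-8*x*y*z) * ρ^7 * (ρ^(n+1) * f (n+1)) + (4 - 8*z^2 - 8*y^2 + 16*y^2*z^2 - 8*x^2 + 16*x^2*z^2 + 16*x^2*y^2) * ρ^6 * (ρ^(n+2) * f (n+2)) + (40*x*y*z - 32*x*y*z^3 - 32*x*y^3*z - 32*x^3*y*z) * ρ^5 * (ρ^(n+3) * f (n+3)))) + (∑' n:ℕ, (6 - 16*z^2 + 16*z^4 - 16*y^2 + 16*y^4 - 16*x^2 + 64*x^2*y^2*z^2 + 16*x^4) * ρ^4 * (ρ^(n+4) * f (n+4))) := Summable.tsum_add g3 sc4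
  have ha3 : (∑' n:ℕ, ((1:ℝ) * ρ^8 * (ρ^n * f n) + (-8*x*y*z) * ρ^7 * (ρ^(n+1) * f (n+1)) + (4 - 8*z^2 - 8*y^2 + 16*y^2*z^2 - 8*x^2 + 16*x^2*z^2 + 16*x^2*y^2) * ρ^6 * (ρ^(n+2) * f (n+2)) + (40*x*y*z - 32*x*y*z^3 - 32*x*y^3*z - 32*x^3*y*z) * ρ^5 * (ρ^(n+3) * f (n+3)))) = (∑' n:ℕ, ((1:ℝ) * ρ^8 * (ρ^n * f n) + (-8*x*y*z) * ρ^7 * (ρ^(n+1) * f (n+1)) + (4 - 8*z^2 - 8*y^2 + 16*y^2*z^2 - 8*x^2 + 16*x^2*z^2 + 16*x^2*y^2) * ρ^6 * (ρ^(n+2) * f (n+2)))) + (∑' n:ℕ, (40*x*y*z - 32*x*y*z^3 - 32*x*y^3*z - 32*x^3*y*z) * ρ^5 * (ρ^(n+3) * f (n+3))) := Summable.tsum_add g2 sc3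
  have ha2 : (∑' n:ℕ, ((1:ℝ) * ρ^8 * (ρ^n * f n) + (-8*x*y*z) * ρ^7 * (ρ^(n+1) * f (n+1)) + (4 - 8*z^2 - 8*y^2 + 16*y^2*z^2 - 8*x^2 + 16*x^2*z^2 + 16*x^2*y^2) * ρ^6 * (ρ^(n+2) * f (n+2)))) = (∑' n:ℕ, ((1:ℝ) * ρ^8 * (ρ^n * f n) + (-8*x*y*z) * ρ^7 * (ρ^(n+1) * f (n+1)))) + (∑' n:ℕ, (4 - 8*z^2 - 8*y^2 + 16*y^2*z^2 - 8*x^2 + 16*x^2*z^2 + 16*x^2*y^2) * ρ^6 * (ρ^(n+2) * f (n+2))) := Summable.tsum_add g1 sc2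
  have ha1 : (∑' n:ℕ, ((1:ℝ) * ρ^8 * (ρ^n * f n) + (-8*x*y*z) * ρ^7 * (ρ^(n+1) * f (n+1)))) = (∑' n:ℕ, ((1:ℝ) * ρ^8 * (ρ^n * f n))) + (∑' n:ℕ, (-8*x*y*z) * ρ^7 * (ρ^(n+1) * f (n+1))) := Summable.tsum_add sc0 sc1
  have h0 : ∀ n:ℕ, (1:ℝ) * ρ^8 * (ρ^n * f n) + (-8*x*y*z) * ρ^7 * (ρ^(n+1) * f (n+1)) + (4 - 8*z^2 - 8*y^2 + 16*y^2*z^2 - 8*x^2 + 16*x^2*z^2 + 16*x^2*y^2) * ρ^6 * (ρ^(n+2) * f (n+2)) + (40*x*y*z - 32*x*y*z^3 - 32*x*y^3*z - 32*x^3*y*z) * ρ^5 * (ρ^(n+3) * f (n+3)) + (6 - 16*z^2 + 16*z^4 - 16*y^2 + 16*y^4 - 16*x^2 + 64*x^2*y^2*z^2 + 16*x^4) * ρ^4 * (ρ^(n+4) * f (n+4)) + (40*x*y*z - 32*x*y*z^3 - 32*x*y^3*z - 32*x^3*y*z) * ρ^3 * (ρ^(n+5) * f (n+5)) + (4 - 8*z^2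 - 8*y^2 + 16*y^2*z^2 - 8*x^2 + 16*x^2*z^2 + 16*x^2*y^2) * ρ^2 * (ρ^(n+6) * f (n+6)) + (-8*x*y*z) * ρ^1 * (ρ^(n+7) * f (n+7)) + (1:ℝ) * (ρ^(n+8) * f (n+8)) = 0 := by
    intro n
    have h := hrecf n
    linear_combination (ρ^(n+8)) * h
  have hzero : (∑' n:ℕ, ((1:ℝ) * ρ^8 * (ρ^n * f n) + (-8*x*y*z) * ρ^7 * (ρ^(n+1) * f (n+1)) + (4 - 8*z^2 - 8*y^2 + 16*y^2*z^2 - 8*x^2 + 16*x^2*z^2 + 16*x^2*y^2) * ρ^6 * (ρ^(n+2) * f (n+2)) + (40*x*y*z - 32*x*y*z^3 - 32*x*y^3*z - 32*x^3*y*z) * ρ^5 * (ρ^(n+3) * f (n+3)) + (6 - 16*z^2 + 16*z^4 - 16*y^2 + 16*y^4 - 16*x^2 + 64*x^2*y^2*z^2 + 16*x^4) * ρ^4 * (ρ^(n+4) * f (n+4)) + (40*x*y*z - 32*x*y*z^3 - 32*x*y^3*z - 32*x^3*y*z) * ρ^3 * (ρ^(n+5) * f (n+5)) + (4 - 8*z^2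 - 8*y^2 + 16*y^2*z^2 - 8*x^2 + 16*x^2*z^2 + 16*x^2*y^2) * ρ^2 * (ρ^(n+6) * f (n+6)) + (-8*x*y*z) * ρ^1 * (ρ^(n+7) * f (n+7)) + (1:ℝ) * (ρ^(n+8) * f (n+8)))) = 0 := by
    rw [tsum_congr h0, tsum_zero]
  rw [ha8, ha7, ha6, ha5, ha4, ha3, ha2, ha1, v0, v1, v2, v3, v4, v5, v6, v7, v8] at hzero
  -- expand f values in hzero
  simp only [hf] at hzero
  have ex7 : ux 7 = 2*x*ux 6 - ux 5 := hxr 5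
  have ex6 : ux 6 = 2*x*ux 5 - ux 4 := hxr 4
  have ex5 : ux 5 = 2*x*ux 4 - ux 3 := hxr 3
  have ex4 : ux 4 = 2*x*ux 3 - ux 2 := hxr 2
  have ex3 : ux 3 = 2*x*ux 2 - ux 1 := hxr 1
  have ex2 : ux 2 = 2*x*ux 1 - ux 0 := hxr 0
  have ex1 : ux 1 = 2*x := by rw [hux 1]; norm_num [Chebyshev.U_one]
  have ex0 : ux 0 = 1 := by rw [hux 0]; norm_num [Chebyshev.U_zero]
  have ey7 : uy 7 = 2*y*uy 6 - uy 5 := hyr 5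
  have ey6 : uy 6 = 2*y*uy 5 - uy 4 := hyr 4
  have ey5 : uy 5 = 2*y*uy 4 - uy 3 := hyr 3
  have ey4 : uy 4 = 2*y*uy 3 - uy 2 := hyr 2
  have ey3 : uy 3 = 2*y*uy 2 - uy 1 := hyr 1
  have ey2 : uy 2 = 2*y*uy 1 - uy 0 := hyr 0
  have ey1 : uy 1 = 2*y := by rw [huy 1]; norm_num [Chebyshev.U_one]
  have ey0 : uy 0 = 1 := by rw [huy 0]; norm_num [Chebyshev.U_zero]
  have ez7 : uz 7 = 2*z*uz 6 - uz 5 := hzr 5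
  have ez6 : uz 6 = 2*z*uz 5 - uz 4 := hzr 4
  have ez5 : uz 5 = 2*z*uz 4 - uz 3 := hzr 3
  have ez4 : uz 4 = 2*z*uz 3 - uz 2 := hzr 2
  have ez3 : uz 3 = 2*z*uz 2 - uz 1 := hzr 1
  have ez2 : uz 2 = 2*z*uz 1 - uz 0 := hzr 0
  have ez1 : uz 1 = 2*z := by rw [huz 1]; norm_num [Chebyshev.U_one]
  have ez0 : uz 0 = 1 := by rw [huz 0]; norm_num [Chebyshev.U_zero]
  rw [ex7, ex6, ex5, ex4, ex3, ex2, ex1, ex0, ey7, ey6, ey5, ey4, ey3, ey2, ey1, ey0, ez7, ez6, ez5, ez4, ez3, ez2, ez1, ez0] at hzero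
  rw [eq_div_iff (ne_of_gt hD)]
  linear_combination hzero
end

section
/- Let n ≥ 1, let x : Fin n → ℝ with |x s| ≤ 1 for every s, and let ρ ∈ ℝ with |ρ| < 1. Then ∑_{k=0}^{∞} ρ^k · ∏_{s} T_k(x s) ≥ 0. -/
open Polynomial

private lemma key_cos_series (ρ φ : ℝ) (hρ : |ρ| < 1) :
    0 ≤ ∑' k : ℕ, ρ ^ k * Real.cos (k * φ) := by
  set z : ℂ := (ρ : ℂ) * Complex.exp ((φ : ℝ) * Complex.I) with hz
  have hnz : ‖z‖ < 1 := by
    rw [hz]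
    simp only [norm_mul, Complex.norm_exp_ofReal_mul_I, mul_one,
      Complex.norm_real, Real.norm_eq_abs]
    exact hρ
  have hsum : Summable (fun k : ℕ => z ^ k) := summable_geometric_of_norm_lt_one hnz
  have hre : ∀ k : ℕ, (z ^ k).re = ρ ^ k * Real.cos (k * φ) := by
    intro k
    rw [hz, mul_pow, ← Complex.exp_nat_mul, ← Complex.ofReal_pow]
    have : (k : ℂ) * ((φ : ℝ) * Complex.I) = ((k * φ : ℝ) : ℂ) * Complex.I := by
      push_cast; ring
    rw [this, Complex.re_ofReal_mul, Complex.exp_ofReal_mul_I_re]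
  have heq : ∑' k : ℕ, ρ ^ k * Real.cos (k * φ) = ((1 - z)⁻¹).re := by
    rw [← tsum_geometric_of_norm_lt_one hnz, Complex.re_tsum hsum]
    exact tsum_congr fun k => (hre k).symm
  rw [heq, Complex.inv_re]
  apply div_nonneg _ (Complex.normSq_nonneg _)
  have h1 : (1 - z).re = 1 - ρ * Real.cos φ := by
    rw [hz]
    simp [Complex.re_ofReal_mul, Complex.exp_ofReal_mul_I_re]
  rw [h1, sub_nonneg]
  calc ρ * Real.cos φ ≤ |ρ * Real.cos φ| := le_abs_self _
    _ = |ρ| * |Real.cos φ| := abs_mul _ _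
    _ ≤ |ρ| * 1 := mul_le_mul_of_nonneg_left (Real.abs_cos_le_one φ) (abs_nonneg _)
    _ ≤ 1 := by linarith

private lemma prod_cos_eq (n : ℕ) (θ : Fin n → ℝ) (y : ℝ) :
    ∏ s, Real.cos (y * θ s) =
      (∑ t ∈ (Finset.univ : Finset (Fin n)).powerset,
        Real.cos (y * (∑ s ∈ t, θ s - ∑ s ∈ Finset.univ \ t, θ s))) / 2 ^ n := by
  have hC : ((∏ s, Real.cos (y * θ s) : ℝ) : ℂ) =
      (∑ t ∈ (Finset.univ : Finset (Fin n)).powerset,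
        Complex.exp (((y * (∑ s ∈ t, θ s - ∑ s ∈ Finset.univ \ t, θ s) : ℝ)) * Complex.I)) / 2 ^ n := by
    rw [Complex.ofReal_prod]
    have hcos : ∀ s : Fin n, ((Real.cos (y * θ s) : ℂ)) =
        (Complex.exp (((y * θ s : ℝ)) * Complex.I) + Complex.exp (((-(y * θ s) : ℝ)) * Complex.I)) / 2 := by
      intro s
      rw [Complex.ofReal_cos, Complex.cos]
      push_cast
      ring
    rw [Finset.prod_congr rfl fun s _ => hcos s]
    rw [Finset.prod_div_distrib, Finset.prod_const, Finset.card_univ, Fintype.card_fin]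
    rw [Finset.prod_add]
    congr 1
    apply Finset.sum_congr rfl
    intro t _
    have e1 : ∏ s ∈ t, Complex.exp (((y * θ s : ℝ)) * Complex.I)
        = Complex.exp (((∑ s ∈ t, y * θ s : ℝ)) * Complex.I) := by
      rw [← Complex.exp_sum, ← Finset.sum_mul]
      norm_cast
    have e2 : ∏ s ∈ Finset.univ \ t, Complex.exp (((-(y * θ s) : ℝ)) * Complex.I)
        = Complex.exp (((∑ s ∈ Finset.univ \ t, -(y * θ s) : ℝ)) * Complex.I) := by
      rw [← Complex.exp_sum, ← Finset.sum_mul]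
      norm_cast
    rw [e1, e2, ← Complex.exp_add]
    congr 1
    have hr : (∑ s ∈ t, y * θ s) + (∑ s ∈ Finset.univ \ t, -(y * θ s))
        = y * (∑ s ∈ t, θ s - ∑ s ∈ Finset.univ \ t, θ s) := by
      rw [Finset.sum_neg_distrib, ← Finset.mul_sum, ← Finset.mul_sum]
      ring
    rw [← hr, Complex.ofReal_add, add_mul]
  have h := congrArg Complex.re hC
  rw [Complex.ofReal_re] at h
  rw [h, show ((2:ℂ) ^ n) = (((2:ℝ) ^ n : ℝ) : ℂ) by push_cast; ring,
    Complex.div_ofReal_re, Complex.re_sum]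
  simp only [Complex.exp_ofReal_mul_I_re]

theorem chebyshev_T_gen_fun_nonneg (n : ℕ) (hn : 1 ≤ n) (x : Fin n → ℝ)
    (hx : ∀ s, |x s| ≤ 1) (ρ : ℝ) (hρ : |ρ| < 1) :
    0 ≤ ∑' k : ℕ, ρ ^ k * ∏ s, (Chebyshev.T ℝ (k : ℤ)).eval (x s) := by
  set θ : Fin n → ℝ := fun s => Real.arccos (x s) with hθ
  have hxθ : ∀ s, Real.cos (θ s) = x s := fun s =>
    Real.cos_arccos (abs_le.1 (hx s)).1 (abs_le.1 (hx s)).2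
  set φ : Finset (Fin n) → ℝ := fun t => ∑ s ∈ t, θ s - ∑ s ∈ Finset.univ \ t, θ s with hφ
  have hterm : ∀ k : ℕ, ρ ^ k * ∏ s, (Chebyshev.T ℝ (k : ℤ)).eval (x s) =
      ∑ t ∈ (Finset.univ : Finset (Fin n)).powerset,
        ρ ^ k * Real.cos ((k : ℝ) * φ t) / 2 ^ n := by
    intro k
    have h1 : ∀ s : Fin n, (Chebyshev.T ℝ (k : ℤ)).eval (x s) = Real.cos ((k : ℝ) * θ s) := by
      intro s
      rw [← hxθ s, Chebyshev.T_real_cos]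
      push_cast
      ring_nf
    rw [Finset.prod_congr rfl fun s _ => h1 s, prod_cos_eq n θ (k : ℝ), eq_comm,
      ← Finset.sum_div, ← Finset.mul_sum, mul_div_assoc]
  have hsummable : ∀ t ∈ (Finset.univ : Finset (Fin n)).powerset,
      Summable (fun k : ℕ => ρ ^ k * Real.cos ((k : ℝ) * φ t) / 2 ^ n) := by
    intro t _
    apply Summable.div_const
    apply Summable.of_norm_bounded (summable_geometric_of_lt_one (abs_nonneg ρ) hρ)
    intro k
    rw [Real.norm_eq_abs, abs_mul, abs_pow]
    calc |ρ| ^ k * |Real.cos (k * φ t)| ≤ |ρ| ^ k * 1 :=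
          mul_le_mul_of_nonneg_left (Real.abs_cos_le_one _) (pow_nonneg (abs_nonneg _) _)
      _ = |ρ| ^ k := mul_one _
  rw [tsum_congr hterm, Summable.tsum_finsetSum hsummable]
  apply Finset.sum_nonneg
  intro t _
  rw [tsum_div_const]
  exact div_nonneg (key_cos_series ρ (φ t) hρ) (pow_nonneg (by norm_num) _)
end
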